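/- Let $\mathfrak{p}$ be a partition and let $\mathfrak{q}$ be obtained from $\mathfrak{p}$ by the $B$-collapse algorithm: extract the even parts into a decreasing sequence of even length (padding with a zero if necessary), apply operation $(\star)$ (each strictly decreasing adjacent pair $(a,b)$ with $a > b$, at odd-even positions, becomes $(a-1,b+1)$), and merge back with the odd parts. Then for every even part $q$ of $\mathfrak{q}$, the quantity $\mathfrak{B}(\mathfrak{q},q) := \sum_{\text{parts } s \text{ of } \mathfrak{q},\ s < q,\ s - q + 1 \in 2\mathbb{Z}}(\text{multiplicity of } s)$ satisfies $\mathfrak{B}(\mathfrak{q}, q) \equiv \mathfrak{B}(\mathfrak{p}, p) \pmod 2$, where $p$ is the corresponding part of $\mathfrak{p}$ from which $q$ arose (in particular $p = q$ when the part is unmodified by $(\star)$). -/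

import Mathlib

/-- The operation `(⋆)`: in a sequence read as consecutive pairs, every strictly decreasing
pair `(a, b)` with `a > b` is replaced by `(a - 1, b + 1)`; all other entries are unchanged. -/
def starOp : List ℕ → List ℕ
  | a :: b :: rest => if b < a then (a - 1) :: (b + 1) :: starOp rest
                      else a :: b :: starOp rest
  | l => l

/-- The parts of a multiset listed in non-increasing order. -/
def descSort (s : Multiset ℕ) : List ℕ :=
  (Multiset.sort s (· ≤ ·)).reverse

/-- The even parts of `𝔭`, listed decreasingly, with a `0` appended if needed to make the
number of entries even. -/
def evenSeq (p : Multiset ℕ) : List ℕ :=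
  let l := descSort (p.filter (fun x => x % 2 = 0))
  if l.length % 2 = 0 then l else l ++ [0]

/-- The `B`-collapse algorithm: apply `(⋆)` to the (zero-padded) decreasing sequence of even
parts of `𝔭`, recombine with the odd parts, and discard zeros. -/
def bCollapse (p : Multiset ℕ) : Multiset ℕ :=
  ((starOp (evenSeq p) : List ℕ) : Multiset ℕ).filter (fun x => 0 < x)
    + p.filter (fun x => x % 2 = 1)

/-- `𝔅(𝔭, q)`: the total multiplicity of parts `s` of `𝔭` with `s < q` and of parity
opposite to `q`. -/
def partB (p : Multiset ℕ) (q : ℕ) : ℕ :=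
  Multiset.card (p.filter (fun s => s < q ∧ s % 2 ≠ q % 2))

@[simp] lemma starOp_nil : starOp [] = [] := rfl
@[simp] lemma starOp_single (a : ℕ) : starOp [a] = [a] := rfl
lemma starOp_cons (a b : ℕ) (rest : List ℕ) :
    starOp (a :: b :: rest) = if b < a then (a - 1) :: (b + 1) :: starOp rest
      else a :: b :: starOp rest := rfl

lemma listPairRec {motive : List ℕ → Prop} (h0 : motive []) (h1 : ∀ a, motive [a])
    (h2 : ∀ a b rest, motive rest → motive (a :: b :: rest)) : ∀ l, motive l
  | [] => h0
  | [a] => h1 a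
  | _ :: _ :: rest => h2 _ _ rest (listPairRec h0 h1 h2 rest)

lemma starOp_even_mem {q : ℕ} (hq : q % 2 = 0) : ∀ l : List ℕ,
    (∀ x ∈ l, x % 2 = 0) → q ∈ starOp l → q ∈ l := by
  refine listPairRec (by simp) (by simp) ?_
  intro a b rest ih hev hmem
  have ha : a % 2 = 0 := hev a (by simp)
  have hb : b % 2 = 0 := hev b (by simp)
  rw [starOp_cons] at hmem
  by_cases hba : b < a
  · rw [if_pos hba] at hmem
    simp only [List.mem_cons] at hmem
    rcases hmem with h | h | h
    · omega
    · omega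
    · have := ih (fun x hx => hev x (by simp [hx])) h
      simp [this]
  · rw [if_neg hba] at hmem
    simp only [List.mem_cons] at hmem
    rcases hmem with h | h | h
    · simp [h]
    · simp [h]
    · have := ih (fun x hx => hev x (by simp [hx])) h
      simp [this]

lemma starOp_count {q : ℕ} (hq : q % 2 = 0) : ∀ l : List ℕ,
    (∀ x ∈ l, x % 2 = 0) → l.Pairwise (· ≥ ·) →
    (q ∈ l ∨ ∀ x ∈ l, x ≤ q) →
    (starOp l).countP (fun s => decide (s < q ∧ s % 2 = 1)) % 2 = 0 := by
  refine listPairRec (by simp) ?_ ?_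
  · intro a hev _ _
    have : a % 2 = 0 := hev a (by simp)
    simp [List.countP_cons, this]
  · intro a b rest ih hev hsort hside
    have ha : a % 2 = 0 := hev a (by simp)
    have hb : b % 2 = 0 := hev b (by simp)
    rw [List.pairwise_cons] at hsort
    obtain ⟨hale, hsort⟩ := hsort
    rw [List.pairwise_cons] at hsort
    obtain ⟨hble, hsort⟩ := hsort
    have hab : b ≤ a := hale b (by simp)
    have hevr : ∀ x ∈ rest, x % 2 = 0 := fun x hx => hev x (by simp [hx])
    rw [starOp_cons]
    by_cases hba : b < a
    · rw [if_pos hba]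
      rcases hside with hmem | hle
      · simp only [List.mem_cons] at hmem
        rcases hmem with h | h | h
        · -- q = a
          have ihr := ih hevr hsort (Or.inr fun x hx => le_trans (hble x hx) (by omega))
          rw [List.countP_cons, List.countP_cons]
          have h1 : (decide (a - 1 < q ∧ (a - 1) % 2 = 1)) = true := by
            simp; omega
          have h2 : (decide (b + 1 < q ∧ (b + 1) % 2 = 1)) = true := by
            simp; omega
          rw [h1, h2]
          omega
        · -- q = b
          have ihr := ih hevr hsort (Or.inr fun x hx => le_trans (hble x hx) (by omega))
          rw [List.countP_cons, List.countP_cons]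
          have h1 : (decide (a - 1 < q ∧ (a - 1) % 2 = 1)) = false := by
            simp; omega
          have h2 : (decide (b + 1 < q ∧ (b + 1) % 2 = 1)) = false := by
            simp; omega
          rw [h1, h2]
          omega
        · -- q ∈ rest
          have hqb : q ≤ b := hble q h
          have ihr := ih hevr hsort (Or.inl h)
          rw [List.countP_cons, List.countP_cons]
          have h1 : (decide (a - 1 < q ∧ (a - 1) % 2 = 1)) = false := by
            simp; omega
          have h2 : (decide (b + 1 < q ∧ (b + 1) % 2 = 1)) = false := by
            simp; omega
          rw [h1, h2]
          omega
      · have haq : a ≤ q := hle a (by simp)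
        have ihr := ih hevr hsort (Or.inr fun x hx => hle x (by simp [hx]))
        rw [List.countP_cons, List.countP_cons]
        have h1 : (decide (a - 1 < q ∧ (a - 1) % 2 = 1)) = true := by
          simp; omega
        have h2 : (decide (b + 1 < q ∧ (b + 1) % 2 = 1)) = true := by
          simp; omega
        rw [h1, h2]
        omega
    · rw [if_neg hba]
      have heq : a = b := by omega
      rw [List.countP_cons, List.countP_cons]
      have h1 : (decide (a < q ∧ a % 2 = 1)) = false := by simp; omega
      have h2 : (decide (b < q ∧ b % 2 = 1)) = false := by simp; omega
      rw [h1, h2]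
      have hside' : q ∈ rest ∨ ∀ x ∈ rest, x ≤ q := by
        rcases hside with hmem | hle
        · simp only [List.mem_cons] at hmem
          rcases hmem with h | h | h
          · exact Or.inr fun x hx => by have := hble x hx; omega
          · exact Or.inr fun x hx => by have := hble x hx; omega
          · exact Or.inl h
        · exact Or.inr fun x hx => hle x (by simp [hx])
      have ihr := ih hevr hsort hside'
      omega

lemma evenSeq_even (p : Multiset ℕ) : ∀ x ∈ evenSeq p, x % 2 = 0 := by
  intro x hx
  unfold evenSeq at hx
  simp only [] at hx
  split at hx
  · unfold descSort at hx
    rw [List.mem_reverse, Multiset.mem_sort, Multiset.mem_filter] at hx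
    exact hx.2
  · rw [List.mem_append] at hx
    rcases hx with hx | hx
    · unfold descSort at hx
      rw [List.mem_reverse, Multiset.mem_sort, Multiset.mem_filter] at hx
      exact hx.2
    · simp at hx; omega

lemma descSort_sorted (s : Multiset ℕ) : (descSort s).Pairwise (· ≥ ·) := by
  unfold descSort
  rw [List.pairwise_reverse]
  exact Multiset.pairwise_sort (s := s) (r := (· ≤ ·))

lemma evenSeq_sorted (p : Multiset ℕ) : (evenSeq p).Pairwise (· ≥ ·) := by
  unfold evenSeq
  simp only []
  split
  · exact descSort_sorted _
  · rw [List.pairwise_append]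
    refine ⟨descSort_sorted _, by simp, ?_⟩
    intro x _ y hy
    simp at hy
    omega

theorem stmt14 (p : Multiset ℕ) (hpos : ∀ x ∈ p, 0 < x) :
    ∀ q ∈ bCollapse p, Even q → partB (bCollapse p) q % 2 = partB p q % 2 := by
  intro q hmem hq
  have hq2 : q % 2 = 0 := Nat.even_iff.mp hq
  set E := evenSeq p with hE
  have hev : ∀ x ∈ E, x % 2 = 0 := evenSeq_even p
  have hsort : E.Pairwise (· ≥ ·) := evenSeq_sorted p
  have hqmem : q ∈ starOp E := by
    unfold bCollapse at hmem
    rw [Multiset.mem_add] at hmem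
    rcases hmem with h | h
    · rw [Multiset.mem_filter, Multiset.mem_coe] at h
      exact h.1
    · rw [Multiset.mem_filter] at h
      omega
  have hqE : q ∈ E := starOp_even_mem hq2 E hev hqmem
  have hcount := starOp_count hq2 E hev hsort (Or.inl hqE)
  unfold partB bCollapse
  rw [Multiset.filter_add, Multiset.card_add]
  have h1 : Multiset.card
      (Multiset.filter (fun s => s < q ∧ s % 2 ≠ q % 2)
        (Multiset.filter (fun x => 0 < x) ((starOp E : List ℕ) : Multiset ℕ)))
      = (starOp E).countP (fun s => decide (s < q ∧ s % 2 = 1)) := by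
    rw [Multiset.filter_filter]
    have : Multiset.filter (fun a => (a < q ∧ a % 2 ≠ q % 2) ∧ 0 < a)
        ((starOp E : List ℕ) : Multiset ℕ)
        = Multiset.filter (fun s => s < q ∧ s % 2 = 1) ((starOp E : List ℕ) : Multiset ℕ) := by
      apply Multiset.filter_congr
      intro x _
      constructor
      · rintro ⟨⟨h1, h2⟩, _⟩; exact ⟨h1, by omega⟩
      · rintro ⟨h1, h2⟩; exact ⟨⟨h1, by omega⟩, by omega⟩
    rw [this, Multiset.filter_coe, Multiset.coe_card, List.countP_eq_length_filter]
  have h2 : Multiset.filter (fun s => s < q ∧ s % 2 ≠ q % 2)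
      (Multiset.filter (fun x => x % 2 = 1) p)
      = Multiset.filter (fun s => s < q ∧ s % 2 ≠ q % 2) p := by
    rw [Multiset.filter_filter]
    apply Multiset.filter_congr
    intro x _
    constructor
    · rintro ⟨⟨h1, h2⟩, _⟩; exact ⟨h1, h2⟩
    · rintro ⟨h1, h2⟩; exact ⟨⟨h1, h2⟩, by omega⟩
  rw [h1, h2]
  omega
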